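/- Let K, C₄ ∈ (0,∞) and let ξ be a centered real random variable such that E exp(λξ) ≤ exp( C₄/(K − |λ|) ) for every λ ∈ R with |λ| < K. Then there exists a finite constant C₅ depending only on the ratio C₄/K such that ( E|ξ|^r )^{1/r} ≤ C₅ · r / K for every r ≥ 1. -/

import Mathlib

open MeasureTheory Real ENNReal

lemma aux_rpow_le_exp (r t : ℝ) (hr : 0 < r) (ht : 0 ≤ t) :
    t ^ r ≤ (r / Real.exp 1) ^ r * Real.exp t := by
  have h0 : (0:ℝ) ≤ t / r := div_nonneg ht hr.le
  have h1 : t / r ≤ Real.exp (t / r - 1) := by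
    have := Real.add_one_le_exp (t / r - 1); linarith
  have h2 : (t / r) ^ r ≤ Real.exp (t / r - 1) ^ r :=
    Real.rpow_le_rpow h0 h1 hr.le
  have hexp : ∀ a : ℝ, Real.exp a ^ r = Real.exp (a * r) := by
    intro a
    rw [Real.rpow_def_of_pos (Real.exp_pos a), Real.log_exp]
  have h3 : Real.exp (t / r - 1) ^ r = Real.exp (t - r) := by
    rw [hexp]; congr 1; field_simp
  have h4 : t ^ r = (t / r) ^ r * r ^ r := by
    rw [← Real.mul_rpow h0 hr.le]; congr 1; field_simp
  have h5 : (r / Real.exp 1) ^ r = r ^ r / Real.exp r := by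
    rw [Real.div_rpow hr.le (Real.exp_pos 1).le, hexp, one_mul]
  rw [h4, h5]
  calc (t / r) ^ r * r ^ r ≤ Real.exp (t - r) * r ^ r := by
        rw [← h3]; exact mul_le_mul_of_nonneg_right h2 (Real.rpow_nonneg hr.le r)
    _ = r ^ r / Real.exp r * Real.exp t := by
        rw [Real.exp_sub]; ring

/-- Example 3.2 (direct part): for every value `ρ > 0` of the ratio `C₄/K` there
is a constant `C₅ > 0` depending only on `ρ` such that every centered real
random variable `ξ` with `E exp(λξ) ≤ exp(C₄/(K − |λ|))` for all `|λ| < K`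
satisfies `(E|ξ|^r)^{1/r} ≤ C₅ · r / K` for every `r ≥ 1`. -/
theorem stmt17 (ρ : ℝ) (hρ : 0 < ρ) :
    ∃ C₅ : ℝ, 0 < C₅ ∧
      ∀ (Ω : Type) (mΩ : MeasurableSpace Ω) (μ : Measure Ω),
        IsProbabilityMeasure μ → ∀ ξ : Ω → ℝ, Measurable ξ →
        Integrable ξ μ → (∫ ω, ξ ω ∂μ) = 0 →
        ∀ K C₄ : ℝ, 0 < K → 0 < C₄ → C₄ / K = ρ →
        (∀ l : ℝ, |l| < K →
          ∫⁻ ω, ENNReal.ofReal (Real.exp (l * ξ ω)) ∂μ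
            ≤ ENNReal.ofReal (Real.exp (C₄ / (K - |l|)))) →
        ∀ r : ℝ, 1 ≤ r →
          (∫⁻ ω, ENNReal.ofReal (|ξ ω| ^ r) ∂μ) ^ (1 / r)
            ≤ ENNReal.ofReal (C₅ * r / K) := by
  refine ⟨4 * Real.exp (2 * ρ), by positivity, ?_⟩
  intro Ω mΩ μ hμ ξ hmeas hint hmean K C₄ hK hC₄ hratio hmgf r hr
  have hr0 : (0:ℝ) < r := lt_of_lt_of_le one_pos hr
  have hK2 : (0:ℝ) < K / 2 := by linarith
  have habs : |K / 2| = K / 2 := abs_of_pos hK2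
  have hexp2ρ : C₄ / (K - K / 2) = 2 * ρ := by
    rw [← hratio, show K - K / 2 = K / 2 from by ring, div_div_eq_mul_div]; ring
  have hb1 := hmgf (K / 2) (by rw [habs]; linarith)
  have hb2 := hmgf (-(K / 2)) (by rw [abs_neg, habs]; linarith)
  rw [habs, hexp2ρ] at hb1
  rw [abs_neg, habs, hexp2ρ] at hb2
  set c : ℝ := (2 * r / (Real.exp 1 * K)) ^ r with hc
  have hcpos : 0 < 2 * r / (Real.exp 1 * K) := by positivity
  -- pointwise real bound
  have hpt : ∀ ω, |ξ ω| ^ r ≤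
      c * (Real.exp (K / 2 * ξ ω) + Real.exp (-(K / 2) * ξ ω)) := by
    intro ω
    have ht : (0:ℝ) ≤ K / 2 * |ξ ω| := by positivity
    have h1 := aux_rpow_le_exp r (K / 2 * |ξ ω|) hr0 ht
    have h2 : |ξ ω| ^ r = (K / 2 * |ξ ω|) ^ r * (2 / K) ^ r := by
      rw [← Real.mul_rpow ht (by positivity)]
      congr 1; field_simp; try ring
    have h3 : (r / Real.exp 1) ^ r * (2 / K) ^ r = c := by
      rw [← Real.mul_rpow (by positivity) (by positivity)]
      congr 1; field_simp; try ring
    have h4 : Real.exp (K / 2 * |ξ ω|) ≤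
        Real.exp (K / 2 * ξ ω) + Real.exp (-(K / 2) * ξ ω) := by
      rcases abs_cases (ξ ω) with ⟨h, _⟩ | ⟨h, _⟩
      · rw [h]
        have := (Real.exp_pos (-(K / 2) * ξ ω)).le
        linarith
      · rw [h]
        have heq : Real.exp (K / 2 * -ξ ω) = Real.exp (-(K / 2) * ξ ω) := by ring_nf
        rw [heq]
        have := (Real.exp_pos (K / 2 * ξ ω)).le
        linarith
    calc |ξ ω| ^ r = (K / 2 * |ξ ω|) ^ r * (2 / K) ^ r := h2
      _ ≤ (r / Real.exp 1) ^ r * Real.exp (K / 2 * |ξ ω|) * (2 / K) ^ r := by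
          apply mul_le_mul_of_nonneg_right h1 (Real.rpow_nonneg (by positivity) r)
      _ = c * Real.exp (K / 2 * |ξ ω|) := by rw [← h3]; ring
      _ ≤ c * (Real.exp (K / 2 * ξ ω) + Real.exp (-(K / 2) * ξ ω)) := by
          apply mul_le_mul_of_nonneg_left h4 (Real.rpow_nonneg (by positivity) r)
  -- measurability
  have hf : Measurable fun ω => ENNReal.ofReal (Real.exp (K / 2 * ξ ω)) := by
    fun_prop
  have hg : Measurable fun ω => ENNReal.ofReal (Real.exp (-(K / 2) * ξ ω)) := by
    fun_prop
  have hcnn : (0:ℝ) ≤ c := Real.rpow_nonneg hcpos.le r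
  -- integral bound
  have hI : (∫⁻ ω, ENNReal.ofReal (|ξ ω| ^ r) ∂μ) ≤
      ENNReal.ofReal (c * (2 * Real.exp (2 * ρ))) := by
    calc (∫⁻ ω, ENNReal.ofReal (|ξ ω| ^ r) ∂μ)
        ≤ ∫⁻ ω, ENNReal.ofReal c *
            (ENNReal.ofReal (Real.exp (K / 2 * ξ ω)) +
             ENNReal.ofReal (Real.exp (-(K / 2) * ξ ω))) ∂μ := by
          apply lintegral_mono
          intro ω
          dsimp only
          rw [← ENNReal.ofReal_add (Real.exp_pos _).le (Real.exp_pos _).le,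
            ← ENNReal.ofReal_mul hcnn]
          exact ENNReal.ofReal_le_ofReal (hpt ω)
      _ = ENNReal.ofReal c *
            ((∫⁻ ω, ENNReal.ofReal (Real.exp (K / 2 * ξ ω)) ∂μ) +
             (∫⁻ ω, ENNReal.ofReal (Real.exp (-(K / 2) * ξ ω)) ∂μ)) := by
          rw [lintegral_const_mul (f := fun ω => ENNReal.ofReal (Real.exp (K / 2 * ξ ω)) + ENNReal.ofReal (Real.exp (-(K / 2) * ξ ω))) _ (hf.add hg), lintegral_add_left hf]
      _ ≤ ENNReal.ofReal c *
            (ENNReal.ofReal (Real.exp (2 * ρ)) + ENNReal.ofReal (Real.exp (2 * ρ))) := by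
          gcongr
      _ = ENNReal.ofReal (c * (2 * Real.exp (2 * ρ))) := by
          rw [← ENNReal.ofReal_add (Real.exp_pos _).le (Real.exp_pos _).le,
            ← ENNReal.ofReal_mul hcnn]
          congr 1; ring
  -- take rpow
  have hXpos : 0 < c * (2 * Real.exp (2 * ρ)) := by
    have : 0 < c := Real.rpow_pos_of_pos hcpos r
    positivity
  have hfinal : (c * (2 * Real.exp (2 * ρ))) ^ (1 / r) ≤
      4 * Real.exp (2 * ρ) * r / K := by
    have h2e : (1:ℝ) ≤ 2 * Real.exp (2 * ρ) := by
      have := Real.one_le_exp (by positivity : (0:ℝ) ≤ 2 * ρ)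
      linarith
    have hmul : (c * (2 * Real.exp (2 * ρ))) ^ (1 / r) =
        (2 * r / (Real.exp 1 * K)) * (2 * Real.exp (2 * ρ)) ^ (1 / r) := by
      rw [Real.mul_rpow hcnn (by linarith), hc,
        ← Real.rpow_mul hcpos.le, mul_one_div_cancel hr0.ne', Real.rpow_one]
    rw [hmul]
    have h6 : (2 * Real.exp (2 * ρ)) ^ (1 / r) ≤ 2 * Real.exp (2 * ρ) := by
      calc (2 * Real.exp (2 * ρ)) ^ (1 / r) ≤ (2 * Real.exp (2 * ρ)) ^ (1:ℝ) :=
            Real.rpow_le_rpow_of_exponent_le h2e (by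
              rw [div_le_one hr0]; linarith)
        _ = 2 * Real.exp (2 * ρ) := Real.rpow_one _
    have h7 : 2 * r / (Real.exp 1 * K) ≤ 2 * r / K := by
      apply div_le_div_of_nonneg_left (by linarith) hK
      calc K = 1 * K := (one_mul K).symm
        _ ≤ Real.exp 1 * K := by
            apply mul_le_mul_of_nonneg_right (Real.one_le_exp zero_le_one) hK.le
    calc (2 * r / (Real.exp 1 * K)) * (2 * Real.exp (2 * ρ)) ^ (1 / r)
        ≤ (2 * r / K) * (2 * Real.exp (2 * ρ)) := by
          apply mul_le_mul h7 h6 (Real.rpow_nonneg (by linarith) _) (by positivity)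
      _ = 4 * Real.exp (2 * ρ) * r / K := by ring
  calc (∫⁻ ω, ENNReal.ofReal (|ξ ω| ^ r) ∂μ) ^ (1 / r)
      ≤ (ENNReal.ofReal (c * (2 * Real.exp (2 * ρ)))) ^ (1 / r) :=
        ENNReal.rpow_le_rpow hI (by positivity)
    _ = ENNReal.ofReal ((c * (2 * Real.exp (2 * ρ))) ^ (1 / r)) :=
        ENNReal.ofReal_rpow_of_pos hXpos
    _ ≤ ENNReal.ofReal (4 * Real.exp (2 * ρ) * r / K) :=
        ENNReal.ofReal_le_ofReal hfinal
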